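/- Let N : ℝ² → ℝ be a functional with N(z) ≥ 0 for all z, N(z) > 0 for z ≠ (0,0), and N(t•z) = t·N(z) for all t ≥ 0. Define z₁ ∘ z₂ = (N(z₁)·N(z₂)/N(z₁ ⊛ z₂)) • (z₁ ⊛ z₂) for z₁, z₂ ≠ (0,0). Then ∘ is associative on nonzero vectors: for all nonzero z₁, z₂, z₃ ∈ ℝ², (z₁ ∘ z₂) ∘ z₃ = z₁ ∘ (z₂ ∘ z₃). -/

import Mathlib

/-- Circular vector-valued vector product on ℝ². -/
def circMul (z w : ℝ × ℝ) : ℝ × ℝ :=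
  (z.1 * w.1 - z.2 * w.2, z.1 * w.2 + w.1 * z.2)

/-- Vector-valued vector product with respect to the phs-functional `N`. -/
noncomputable def nMul (N : ℝ × ℝ → ℝ) (z₁ z₂ : ℝ × ℝ) : ℝ × ℝ :=
  (N z₁ * N z₂ / N (circMul z₁ z₂)) • circMul z₁ z₂

lemma circ_ne (z w : ℝ × ℝ) (hz : z ≠ (0,0)) (hw : w ≠ (0,0)) :
    circMul z w ≠ (0,0) := by
  intro h
  have h1 : z.1 * w.1 - z.2 * w.2 = 0 := congrArg Prod.fst h
  have h2 : z.1 * w.2 + w.1 * z.2 = 0 := congrArg Prod.snd h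
  have hz' : 0 < z.1^2 + z.2^2 := by
    rcases eq_or_ne z.1 0 with h|h
    · have : z.2 ≠ 0 := fun h2' => hz (Prod.ext h h2')
      positivity
    · positivity
  have hw' : 0 < w.1^2 + w.2^2 := by
    rcases eq_or_ne w.1 0 with h|h
    · have : w.2 ≠ 0 := fun h2' => hw (Prod.ext h h2')
      positivity
    · positivity
  nlinarith [sq_nonneg (z.1*w.1 - z.2*w.2), sq_nonneg (z.1*w.2 + w.1*z.2)]

lemma circ_smul_left (t : ℝ) (z w : ℝ × ℝ) :
    circMul (t • z) w = t • circMul z w := by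
  simp only [circMul, Prod.smul_def, smul_eq_mul, Prod.mk.injEq]
  constructor <;> ring

lemma circ_smul_right (t : ℝ) (z w : ℝ × ℝ) :
    circMul z (t • w) = t • circMul z w := by
  simp only [circMul, Prod.smul_def, smul_eq_mul, Prod.mk.injEq]
  constructor <;> ring

lemma circ_assoc (a b c : ℝ × ℝ) :
    circMul (circMul a b) c = circMul a (circMul b c) := by
  simp only [circMul, Prod.mk.injEq]
  constructor <;> ring

theorem stmt_10 (N : ℝ × ℝ → ℝ)
    (hN0 : ∀ z, 0 ≤ N z) (hNpos : ∀ z : ℝ × ℝ, z ≠ (0, 0) → 0 < N z)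
    (hNhom : ∀ (t : ℝ), 0 ≤ t → ∀ z : ℝ × ℝ, N (t • z) = t * N z)
    (z₁ z₂ z₃ : ℝ × ℝ) (hz₁ : z₁ ≠ (0, 0)) (hz₂ : z₂ ≠ (0, 0)) (hz₃ : z₃ ≠ (0, 0)) :
    nMul N (nMul N z₁ z₂) z₃ = nMul N z₁ (nMul N z₂ z₃) := by
  set c := circMul z₁ z₂ with hc
  set e := circMul z₂ z₃ with he
  have hcne : c ≠ (0,0) := circ_ne _ _ hz₁ hz₂
  have hene : e ≠ (0,0) := circ_ne _ _ hz₂ hz₃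
  have hdne : circMul c z₃ ≠ (0,0) := circ_ne _ _ hcne hz₃
  have hd'ne : circMul z₁ e ≠ (0,0) := circ_ne _ _ hz₁ hene
  have hN1 := hNpos _ hz₁
  have hN2 := hNpos _ hz₂
  have hN3 := hNpos _ hz₃
  have hNc := hNpos _ hcne
  have hNe := hNpos _ hene
  have hNd := hNpos _ hdne
  set t : ℝ := N z₁ * N z₂ / N c with ht
  set s : ℝ := N z₂ * N z₃ / N e with hs
  have htpos : 0 < t := by positivity
  have hspos : 0 < s := by positivity
  have key : circMul c z₃ = circMul z₁ e := circ_assoc z₁ z₂ z₃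
  have hNd' : N (circMul z₁ e) = N (circMul c z₃) := by rw [key]
  calc nMul N (nMul N z₁ z₂) z₃
      = (N z₁ * N z₂ * N z₃ / N (circMul c z₃)) • circMul c z₃ := by
        have h1 : nMul N z₁ z₂ = t • c := rfl
        rw [h1]
        unfold nMul
        rw [circ_smul_left, hNhom t htpos.le, hNhom t htpos.le, smul_smul]
        congr 1
        field_simp [ht]
        rw [ht, div_mul_cancel₀ _ hNc.ne']
    _ = (N z₁ * N z₂ * N z₃ / N (circMul z₁ e)) • circMul z₁ e := by rw [key]
    _ = nMul N z₁ (nMul N z₂ z₃) := by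
        have h1 : nMul N z₂ z₃ = s • e := rfl
        rw [h1]
        unfold nMul
        rw [circ_smul_right, hNhom s hspos.le, hNhom s hspos.le, smul_smul]
        congr 1
        rw [hNd']
        field_simp [hs]
        rw [hs, div_mul_cancel₀ _ hNe.ne']
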